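/- Let A be a finite-dimensional Novikov algebra over ℂ. If I and J are two right-nilpotent ideals of A, then I + J is a right-nilpotent ideal. Consequently A has a largest right-nilpotent ideal N(A). -/

import Mathlib

/-- Iterated right multiplication: `rightIter mul x [s₁,…,sₘ] = R_{sₘ} ⋯ R_{s₁} x`. -/
def rightIter {k V : Type*} [Field k] [AddCommGroup V] [Module k V]
    (mul : V →ₗ[k] V →ₗ[k] V) : V → List V → V
  | x, [] => x
  | x, s :: t => rightIter mul (mul x s) t

/-- `I` is a (two-sided) ideal of the algebra `(V, mul)`. -/
def IsNovikovIdeal {k V : Type*} [Field k] [AddCommGroup V] [Module k V]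
    (mul : V →ₗ[k] V →ₗ[k] V) (I : Submodule k V) : Prop :=
  (∀ a : V, ∀ x ∈ I, mul a x ∈ I) ∧ (∀ x ∈ I, ∀ a : V, mul x a ∈ I)

/-- `S` is right-nilpotent: some length `m ≥ 1` of iterated right multiplications by
elements of `S` annihilates the whole algebra. -/
def IsRightNilpotent {k V : Type*} [Field k] [AddCommGroup V] [Module k V]
    (mul : V →ₗ[k] V →ₗ[k] V) (I : Submodule k V) : Prop :=
  ∃ m : ℕ, 1 ≤ m ∧ ∀ l : List V, l.length = m → (∀ s ∈ l, s ∈ I) →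
    ∀ x : V, rightIter mul x l = 0

section Aux

variable {V : Type*} [AddCommGroup V] [Module ℂ V] (mul : V →ₗ[ℂ] V →ₗ[ℂ] V)

lemma rightIter_zero : ∀ l : List V, rightIter mul 0 l = 0 := by
  intro l
  induction l with
  | nil => rfl
  | cons s t ih =>
      show rightIter mul (mul 0 s) t = 0
      rw [map_zero, LinearMap.zero_apply, ih]

lemma rightIter_add :
    ∀ (l : List V) (x y : V), rightIter mul (x + y) l = rightIter mul x l + rightIter mul y l := by
  intro l
  induction l with
  | nil => intro x y; rfl
  | cons s t ih =>
      intro x y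
      show rightIter mul (mul (x + y) s) t = _
      rw [map_add, LinearMap.add_apply, ih (mul x s) (mul y s)]
      rfl

lemma rightIter_append (x : V) :
    ∀ l₁ l₂ : List V, rightIter mul x (l₁ ++ l₂) = rightIter mul (rightIter mul x l₁) l₂ := by
  intro l₁
  induction l₁ generalizing x with
  | nil => intro l₂; rfl
  | cons s t ih => intro l₂; exact ih (mul x s) l₂

lemma rightIter_swap (h2 : ∀ a b c : V, mul (mul a b) c = mul (mul a c) b) (s : V) :
    ∀ (l : List V) (x : V), rightIter mul (mul x s) l = mul (rightIter mul x l) s := by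
  intro l
  induction l with
  | nil => intro x; rfl
  | cons t l' ih =>
      intro x
      show rightIter mul (mul (mul x s) t) l' = _
      rw [h2 x s t, ih (mul x t)]
      rfl

lemma novikov_sup_ideal (I J : Submodule ℂ V)
    (hI : IsNovikovIdeal mul I) (hJ : IsNovikovIdeal mul J) :
    IsNovikovIdeal mul (I ⊔ J) := by
  constructor
  · intro a x hx
    obtain ⟨i, hi, j, hj, rfl⟩ := Submodule.mem_sup.mp hx
    rw [map_add]
    exact Submodule.add_mem_sup (hI.1 a i hi) (hJ.1 a j hj)
  · intro x hx a
    obtain ⟨i, hi, j, hj, rfl⟩ := Submodule.mem_sup.mp hx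
    rw [map_add, LinearMap.add_apply]
    exact Submodule.add_mem_sup (hI.2 i hi a) (hJ.2 j hj a)

lemma novikov_sup_nilpotent (h2 : ∀ a b c : V, mul (mul a b) c = mul (mul a c) b)
    (I J : Submodule ℂ V)
    (hIn : IsRightNilpotent mul I) (hJn : IsRightNilpotent mul J) :
    IsRightNilpotent mul (I ⊔ J) := by
  obtain ⟨mI, hmI1, hmI⟩ := hIn
  obtain ⟨mJ, hmJ1, hmJ⟩ := hJn
  set Q : ℕ → V → Prop := fun n x => ∀ a b : ℕ, a + b = n → ∀ lI lJ : List V,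
    lI.length = a → lJ.length = b → (∀ s ∈ lI, s ∈ I) → (∀ s ∈ lJ, s ∈ J) →
    rightIter mul x (lI ++ lJ) = 0 with hQdef
  have hA : ∀ x : V, Q (mI + mJ) x := by
    intro x a b hab lI lJ hlI hlJ hImem hJmem
    rcases le_or_gt mI a with hle | hlt
    · have hsplit : lI = lI.take mI ++ lI.drop mI := (List.take_append_drop _ _).symm
      rw [hsplit, List.append_assoc, rightIter_append]
      have h0 : rightIter mul x (lI.take mI) = 0 :=
        hmI _ (by rw [List.length_take]; omega)
          (fun s hs => hImem s (List.take_subset _ _ hs)) x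
      rw [h0, rightIter_zero]
    · have hble : mJ ≤ b := by omega
      have hsplit : lJ = lJ.take (b - mJ) ++ lJ.drop (b - mJ) := (List.take_append_drop _ _).symm
      rw [hsplit, ← List.append_assoc, rightIter_append]
      exact hmJ _ (by rw [List.length_drop]; omega)
        (fun s hs => hJmem s (List.drop_subset _ _ hs)) _
  have hB : ∀ (n : ℕ) (x s : V), Q (n + 1) x → s ∈ I ⊔ J → Q n (mul x s) := by
    intro n x s hQ hs
    obtain ⟨i, hi, j, hj, rfl⟩ := Submodule.mem_sup.mp hs
    intro a b hab lI lJ hlI hlJ hImem hJmem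
    have hsum : mul x (i + j) = mul x i + mul x j := map_add _ _ _
    rw [hsum, rightIter_add]
    have e1 : rightIter mul (mul x i) (lI ++ lJ) = rightIter mul x ((i :: lI) ++ lJ) := rfl
    have e3 : rightIter mul x (lI ++ (lJ ++ [j])) = mul (rightIter mul x (lI ++ lJ)) j := by
      rw [← List.append_assoc, rightIter_append]
      rfl
    have e2 : rightIter mul (mul x j) (lI ++ lJ) = rightIter mul x (lI ++ (lJ ++ [j])) :=
      (rightIter_swap mul h2 j (lI ++ lJ) x).trans e3.symm
    rw [e1, e2]
    rw [hQ (a + 1) b (by omega) (i :: lI) lJ (by simp [hlI]) hlJ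
        (by intro r hr; rcases List.mem_cons.mp hr with h | h
            · exact h ▸ hi
            · exact hImem r h) hJmem,
      hQ a (b + 1) (by omega) lI (lJ ++ [j]) hlI (by simp [hlJ]) hImem
        (by intro r hr; rcases List.mem_append.mp hr with h | h
            · exact hJmem r h
            · simpa [List.mem_singleton.mp h] using hj)]
    simp
  have hstep : ∀ l : List V, (∀ s ∈ l, s ∈ I ⊔ J) → ∀ (n : ℕ) (x : V),
      Q (l.length + n) x → Q n (rightIter mul x l) := by
    intro l
    induction l with
    | nil => intro _ n x h; show Q n x; simpa using h
    | cons s t ih =>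
        intro hmem n x hQ
        have e : (s :: t).length + n = t.length + n + 1 := by simp; omega
        rw [e] at hQ
        exact ih (fun r hr => hmem r (List.mem_cons_of_mem _ hr)) n (mul x s)
          (hB (t.length + n) x s hQ (hmem s List.mem_cons_self))
  refine ⟨mI + mJ, by omega, ?_⟩
  intro l hl hmem x
  have hx0 : Q 0 (rightIter mul x l) := by
    apply hstep l hmem 0 x
    rw [hl]
    exact hA x
  have := hx0 0 0 rfl [] [] rfl rfl (by simp) (by simp)
  simpa [rightIter] using this

lemma novikov_bot_nilpotent : IsRightNilpotent mul (⊥ : Submodule ℂ V) := by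
  refine ⟨1, le_refl 1, ?_⟩
  intro l hl hmem x
  obtain ⟨s, rfl⟩ := List.length_eq_one_iff.mp hl
  have hs : s = 0 := by simpa using hmem s (by simp)
  show rightIter mul (mul x s) [] = 0
  simp [rightIter, hs]

lemma novikov_bot_ideal : IsNovikovIdeal mul (⊥ : Submodule ℂ V) := by
  constructor
  · intro a x hx
    simp only [Submodule.mem_bot] at hx ⊢
    rw [hx, map_zero]
  · intro x hx a
    simp only [Submodule.mem_bot] at hx ⊢
    rw [hx, map_zero, LinearMap.zero_apply]

end Aux

/-- In a finite-dimensional Novikov algebra over `ℂ`, the sum of two right-nilpotent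
ideals is a right-nilpotent ideal; consequently there is a largest right-nilpotent
ideal `N(A)`. -/
theorem novikov_largest_right_nilpotent_ideal {V : Type*} [AddCommGroup V] [Module ℂ V]
    [FiniteDimensional ℂ V]
    (mul : V →ₗ[ℂ] V →ₗ[ℂ] V)
    (h1 : ∀ a b c : V, mul a (mul b c) - mul b (mul a c) = mul (mul a b) c - mul (mul b a) c)
    (h2 : ∀ a b c : V, mul (mul a b) c = mul (mul a c) b)
    (I J : Submodule ℂ V)
    (hI : IsNovikovIdeal mul I) (hJ : IsNovikovIdeal mul J)
    (hIn : IsRightNilpotent mul I) (hJn : IsRightNilpotent mul J) :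
    (IsNovikovIdeal mul (I ⊔ J) ∧ IsRightNilpotent mul (I ⊔ J)) ∧
    ∃ N : Submodule ℂ V, IsNovikovIdeal mul N ∧ IsRightNilpotent mul N ∧
      ∀ I' : Submodule ℂ V, IsNovikovIdeal mul I' → IsRightNilpotent mul I' → I' ≤ N := by
  refine ⟨⟨novikov_sup_ideal mul I J hI hJ, novikov_sup_nilpotent mul h2 I J hIn hJn⟩, ?_⟩
  set S : Set (Submodule ℂ V) :=
    {N | IsNovikovIdeal mul N ∧ IsRightNilpotent mul N} with hSdef
  have hSne : S.Nonempty := ⟨⊥, novikov_bot_ideal mul, novikov_bot_nilpotent mul⟩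
  obtain ⟨N, hNS, hNmax⟩ :=
    (set_has_maximal_iff_noetherian.mpr (inferInstance : IsNoetherian ℂ V)) S hSne
  refine ⟨N, hNS.1, hNS.2, ?_⟩
  intro I' hI' hI'n
  have hsup : N ⊔ I' ∈ S :=
    ⟨novikov_sup_ideal mul N I' hNS.1 hI', novikov_sup_nilpotent mul h2 N I' hNS.2 hI'n⟩
  have : ¬ N < N ⊔ I' := hNmax _ hsup
  have heq : N ⊔ I' = N := by
    rcases lt_or_eq_of_le (le_sup_left : N ≤ N ⊔ I') with h | h
    · exact absurd h this
    · exact h.symm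
  calc I' ≤ N ⊔ I' := le_sup_right
    _ = N := heq
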